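/- Let U, V be open neighborhoods of 0 in ℂ × ℂ, let φ = (φ₁, φ₂) : U → V be a biholomorphism with φ(0) = 0, let g be complex analytic on V, and set f := g ∘ φ. Let α : ℂ → ℂ be analytic near 0 with α(0) = 0, assume ψ(y) := φ₂(α(y), y) has vanishing order exactly 1 at 0, and let β(w) := φ₁(α(ψ⁻¹(w)), ψ⁻¹(w)), so that φ(α(y), y) = (β(ψ(y)), ψ(y)) near 0. Assume y ↦ f_x(α(y),y) and y ↦ f_y(α(y),y) do not both vanish identically near 0, and let L_f := min( ord₀(y ↦ f_x(α(y),y)), ord₀(y ↦ f_y(α(y),y)) ) and L_g := min( ord₀(w ↦ g_x(β(w),w)), ord₀(w ↦ g_y(β(w),w)) ). Define the gradient degree d_f(α) as the least natural number q ≥ 1 such that inf over u ∈ ℂ of min( ord₀(y ↦ f_x(α(y)+u y^q, y)), ord₀(y ↦ f_y(α(y)+u y^q, y)) ) equals L_f, and define d_g(β) analogously with g, β, L_g. Then d_f(α) = d_g(β). (The gradient degree of corresponding arcs is the same: d_{φ(α)} = d_α.) -/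

import Mathlib

open Filter

/-- The vanishing order at `0` of a function `u : ℂ → ℂ`: the least `n` such that the
`n`-th Taylor coefficient of `u` at `0` is nonzero, in `ℕ∞` (`⊤` if none is). -/
noncomputable def ord₀ (u : ℂ → ℂ) : ℕ∞ :=
  sInf ((fun n : ℕ => (n : ℕ∞)) '' {n : ℕ | iteratedDeriv n u 0 ≠ 0})

/-- `Λ_f(q)`: the infimum over `u ∈ ℂ` of the minimum of the vanishing orders at `0` of
`y ↦ f_x(α(y)+u y^q, y)` and `y ↦ f_y(α(y)+u y^q, y)`. -/
noncomputable def gradOrdPert (f : ℂ × ℂ → ℂ) (α : ℂ → ℂ) (q : ℕ) : ℕ∞ :=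
  ⨅ u : ℂ,
    min (ord₀ (fun y => fderiv ℂ f (α y + u * y ^ q, y) (1, 0)))
        (ord₀ (fun y => fderiv ℂ f (α y + u * y ^ q, y) (0, 1)))

namespace GradDeg

set_option linter.unusedSectionVars false

open Topology

/-! ### ℕ∞ helpers -/

lemma enat_le_of {x y : ℕ∞} (h : ∀ n : ℕ, (n : ℕ∞) ≤ x → (n : ℕ∞) ≤ y) : x ≤ y := by
  cases x with
  | top =>
    have h' : ∀ n : ℕ, (n : ℕ∞) ≤ y := fun n => h n le_top
    cases y with
    | top => exact le_rfl
    | coe m =>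
      have := Nat.cast_le.mp (h' (m + 1))
      omega
  | coe n => exact h n le_rfl

/-! ### basic `ord₀` lemmas -/

lemma ord0_ge_iff {u : ℂ → ℂ} {n : ℕ} :
    (n : ℕ∞) ≤ ord₀ u ↔ ∀ k < n, iteratedDeriv k u 0 = 0 := by
  rw [ord₀, le_sInf_iff]
  constructor
  · intro h k hk
    by_contra hne
    exact absurd (Nat.cast_le.mp (h _ ⟨k, hne, rfl⟩)) (Nat.not_le.mpr hk)
  · rintro h _ ⟨k, hk, rfl⟩
    exact Nat.cast_le.mpr (not_lt.mp fun hkn => hk (h k hkn))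

lemma ord0_eq_coe {u : ℂ → ℂ} {n : ℕ} :
    ord₀ u = (n : ℕ∞) ↔ (∀ k < n, iteratedDeriv k u 0 = 0) ∧ iteratedDeriv n u 0 ≠ 0 := by
  constructor
  · intro h
    refine ⟨ord0_ge_iff.mp h.ge, fun h0 => ?_⟩
    have : ((n + 1 : ℕ) : ℕ∞) ≤ ord₀ u := by
      refine ord0_ge_iff.mpr fun k hk => ?_
      rcases Nat.lt_succ_iff_lt_or_eq.mp hk with h' | h'
      · exact ord0_ge_iff.mp h.ge k h'
      · subst h'; exact h0
    rw [h] at this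
    have := Nat.cast_le.mp this
    omega
  · rintro ⟨h1, h2⟩
    exact le_antisymm (sInf_le ⟨n, h2, rfl⟩) (ord0_ge_iff.mpr h1)

lemma ord0_congr {u v : ℂ → ℂ} (h : u =ᶠ[𝓝 (0 : ℂ)] v) : ord₀ u = ord₀ v := by
  have hs : {n : ℕ | iteratedDeriv n u 0 ≠ 0} = {n : ℕ | iteratedDeriv n v 0 ≠ 0} := by
    ext k
    simp [Filter.EventuallyEq.iteratedDeriv_eq k h]
  rw [ord₀, ord₀, hs]

lemma ord0_le_coe_of_ne {u : ℂ → ℂ} {n : ℕ} (h : iteratedDeriv n u 0 ≠ 0) :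
    ord₀ u ≤ (n : ℕ∞) := sInf_le ⟨n, h, rfl⟩

/-! ### Taylor coefficients of analytic functions -/

lemma iter_eq_coeff {u : ℂ → ℂ} {p : FormalMultilinearSeries ℂ ℂ ℂ}
    (hp : HasFPowerSeriesAt u p 0) (n : ℕ) :
    iteratedDeriv n u 0 = ((n.factorial : ℕ) : ℂ) * p.coeff n := by
  obtain ⟨r, hr⟩ := hp
  have h := hr.factorial_smul (1 : ℂ) n
  rw [iteratedDeriv_eq_iteratedFDeriv]
  rw [← h, nsmul_eq_mul]
  rfl

lemma iter_add {u v : ℂ → ℂ} (hu : AnalyticAt ℂ u 0) (hv : AnalyticAt ℂ v 0) (n : ℕ) :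
    iteratedDeriv n (fun y => u y + v y) 0 = iteratedDeriv n u 0 + iteratedDeriv n v 0 := by
  obtain ⟨p, hp⟩ := hu
  obtain ⟨q, hq⟩ := hv
  have hpq : HasFPowerSeriesAt (fun y => u y + v y) (p + q) 0 := hp.add hq
  rw [iter_eq_coeff hpq, iter_eq_coeff hp, iter_eq_coeff hq]
  have : (p + q).coeff n = p.coeff n + q.coeff n := rfl
  rw [this]; ring

lemma iter_sub {u v : ℂ → ℂ} (hu : AnalyticAt ℂ u 0) (hv : AnalyticAt ℂ v 0) (n : ℕ) :
    iteratedDeriv n (fun y => u y - v y) 0 = iteratedDeriv n u 0 - iteratedDeriv n v 0 := by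
  obtain ⟨p, hp⟩ := hu
  obtain ⟨q, hq⟩ := hv
  have hpq : HasFPowerSeriesAt (fun y => u y - v y) (p - q) 0 := hp.sub hq
  rw [iter_eq_coeff hpq, iter_eq_coeff hp, iter_eq_coeff hq]
  have : (p - q).coeff n = p.coeff n - q.coeff n := rfl
  rw [this]; ring

lemma iter_const_zero (n : ℕ) : iteratedDeriv n (fun _ : ℂ => (0 : ℂ)) 0 = 0 := by
  induction n with
  | zero => simp
  | succ k ih =>
    rw [iteratedDeriv_succ']
    have : deriv (fun _ : ℂ => (0 : ℂ)) = fun _ : ℂ => (0 : ℂ) := by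
      funext x; simp
    rw [this]
    exact ih

/-- analyticity of the derivative of a 1-variable analytic function -/
lemma analyticAt_deriv {u : ℂ → ℂ} {x : ℂ} (hu : AnalyticAt ℂ u x) :
    AnalyticAt ℂ (deriv u) x := by
  have h1 : AnalyticAt ℂ (fderiv ℂ u) x := hu.fderiv
  have h2 : deriv u = fun y => (fderiv ℂ u y) 1 := by
    funext y; rw [fderiv_apply_one_eq_deriv]
  rw [h2]
  exact ((ContinuousLinearMap.apply ℂ ℂ (1 : ℂ)).analyticAt _).comp h1


/-! ### multiplication by `y` and by powers of `y` -/

lemma iter_id_mul {w : ℂ → ℂ} (hw : AnalyticAt ℂ w 0) (k : ℕ) :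
    iteratedDeriv (k + 1) (fun y => y * w y) 0 = (k + 1 : ℂ) * iteratedDeriv k w 0 := by
  induction k generalizing w with
  | zero =>
    rw [iteratedDeriv_succ']
    have hd : (deriv fun y => y * w y) =ᶠ[𝓝 (0 : ℂ)] fun y => w y + y * deriv w y := by
      filter_upwards [hw.eventually_analyticAt] with y hy
      have := (hasDerivAt_id y).mul hy.differentiableAt.hasDerivAt
      simpa [Pi.mul_def] using this.deriv
    rw [Filter.EventuallyEq.iteratedDeriv_eq 0 hd]
    simp
  | succ k ih =>
    rw [iteratedDeriv_succ']
    have hd : (deriv fun y => y * w y) =ᶠ[𝓝 (0 : ℂ)] fun y => w y + y * deriv w y := by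
      filter_upwards [hw.eventually_analyticAt] with y hy
      have := (hasDerivAt_id y).mul hy.differentiableAt.hasDerivAt
      simpa [Pi.mul_def] using this.deriv
    rw [Filter.EventuallyEq.iteratedDeriv_eq (k + 1) hd]
    have hv : AnalyticAt ℂ (fun y : ℂ => y * deriv w y) 0 := by
      exact analyticAt_id.mul (analyticAt_deriv hw)
    rw [iter_add hw hv]
    rw [ih (analyticAt_deriv hw)]
    rw [← iteratedDeriv_succ']
    push_cast
    ring

lemma iter_pow_mul {w : ℂ → ℂ} (hw : AnalyticAt ℂ w 0) {n k : ℕ} (hk : k < n) :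
    iteratedDeriv k (fun y => y ^ n * w y) 0 = 0 := by
  induction n generalizing w k with
  | zero => omega
  | succ n ih =>
    have hrw : (fun y : ℂ => y ^ (n + 1) * w y) = fun y => y * (y ^ n * w y) := by
      funext y; ring
    rw [hrw]
    have hW : AnalyticAt ℂ (fun y : ℂ => y ^ n * w y) 0 := (analyticAt_id.pow n).mul hw
    cases k with
    | zero => simp
    | succ j =>
      rw [iter_id_mul hW j, ih hw (by omega)]
      ring

lemma iter_pow_mul_self {w : ℂ → ℂ} (hw : AnalyticAt ℂ w 0) (n : ℕ) :
    iteratedDeriv n (fun y => y ^ n * w y) 0 = ((n.factorial : ℕ) : ℂ) * w 0 := by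
  induction n generalizing w with
  | zero => simp
  | succ n ih =>
    have hrw : (fun y : ℂ => y ^ (n + 1) * w y) = fun y => y * (y ^ n * w y) := by
      funext y; ring
    rw [hrw]
    have hW : AnalyticAt ℂ (fun y : ℂ => y ^ n * w y) 0 := (analyticAt_id.pow n).mul hw
    rw [iter_id_mul hW n, ih hw]
    rw [Nat.factorial_succ]
    push_cast
    ring

/-! ### dividing out zeros -/

lemma exists_factor {u : ℂ → ℂ} (hu : AnalyticAt ℂ u 0) (n : ℕ)
    (h : ∀ k < n, iteratedDeriv k u 0 = 0) :
    ∃ w, AnalyticAt ℂ w 0 ∧ u = fun y => y ^ n * w y := by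
  induction n generalizing u with
  | zero => exact ⟨u, hu, by funext y; simp⟩
  | succ n ih =>
    have hu0 : u 0 = 0 := by
      have := h 0 (by omega)
      simpa using this
    obtain ⟨p, hp⟩ := hu
    have hw1 : AnalyticAt ℂ (dslope u 0) 0 := ⟨p.fslope, hp.has_fpower_series_dslope_fslope⟩
    have hrep : u = fun y => y * dslope u 0 y := by
      funext y
      by_cases hy : y = 0
      · subst hy; simp [hu0]
      · rw [dslope_of_ne _ hy, slope_def_field, hu0]
        field_simp
        ring
    have hvan : ∀ k < n, iteratedDeriv k (dslope u 0) 0 = 0 := by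
      intro k hk
      have hT := iter_id_mul hw1 k
      rw [← hrep] at hT
      have h0 : iteratedDeriv (k + 1) u 0 = 0 := h (k + 1) (by omega)
      rw [h0] at hT
      have hk1 : ((k : ℂ) + 1) ≠ 0 := by
        exact_mod_cast Nat.succ_ne_zero k
      exact (mul_eq_zero.mp hT.symm).resolve_left hk1
    obtain ⟨w, hw, hwrep⟩ := ih hw1 hvan
    refine ⟨w, hw, ?_⟩
    rw [hrep, hwrep]
    funext y; ring

lemma ord0_ge_iff_factor {u : ℂ → ℂ} (hu : AnalyticAt ℂ u 0) {n : ℕ} :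
    (n : ℕ∞) ≤ ord₀ u ↔ ∃ w, AnalyticAt ℂ w 0 ∧ u = fun y => y ^ n * w y := by
  constructor
  · intro h
    exact exists_factor hu n (ord0_ge_iff.mp h)
  · rintro ⟨w, hw, rfl⟩
    exact ord0_ge_iff.mpr fun k hk => iter_pow_mul hw hk

lemma ord0_eq_coe_factor {u : ℂ → ℂ} (hu : AnalyticAt ℂ u 0) {n : ℕ} :
    ord₀ u = (n : ℕ∞) ↔
      ∃ w, AnalyticAt ℂ w 0 ∧ w 0 ≠ 0 ∧ u = fun y => y ^ n * w y := by
  constructor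
  · intro h
    obtain ⟨hvan, hne⟩ := ord0_eq_coe.mp h
    obtain ⟨w, hw, hrep⟩ := exists_factor hu n hvan
    refine ⟨w, hw, ?_, hrep⟩
    intro h0
    rw [hrep] at hne
    rw [iter_pow_mul_self hw, h0, mul_zero] at hne
    exact hne rfl
  · rintro ⟨w, hw, hw0, rfl⟩
    refine ord0_eq_coe.mpr ⟨fun k hk => iter_pow_mul hw hk, ?_⟩
    rw [iter_pow_mul_self hw]
    exact mul_ne_zero (by exact_mod_cast Nat.factorial_ne_zero n) hw0

/-! ### order arithmetic -/

lemma ord0_le_mul_left {c h : ℂ → ℂ} (hc : AnalyticAt ℂ c 0) (hh : AnalyticAt ℂ h 0) :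
    ord₀ h ≤ ord₀ (fun y => c y * h y) := by
  refine enat_le_of fun n hn => ?_
  obtain ⟨w, hw, hrep⟩ := (ord0_ge_iff_factor hh).mp hn
  refine (ord0_ge_iff_factor (hc.mul hh)).mpr ⟨fun y => c y * w y, hc.mul hw, ?_⟩
  funext y
  rw [Pi.mul_apply, congrFun hrep y]
  ring

lemma ord0_min_le_add {u v : ℂ → ℂ} (hu : AnalyticAt ℂ u 0) (hv : AnalyticAt ℂ v 0) :
    min (ord₀ u) (ord₀ v) ≤ ord₀ (fun y => u y + v y) := by
  refine enat_le_of fun n hn => ord0_ge_iff.mpr fun k hk => ?_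
  rw [iter_add hu hv]
  rw [ord0_ge_iff.mp (le_trans hn (min_le_left _ _)) k hk,
    ord0_ge_iff.mp (le_trans hn (min_le_right _ _)) k hk, add_zero]

/-! ### composition with an order one reparametrization -/

lemma ord0_comp {h r : ℂ → ℂ} (hh : AnalyticAt ℂ h 0) (hr : AnalyticAt ℂ r 0)
    (hr0 : r 0 = 0) (hr1 : deriv r 0 ≠ 0) :
    ord₀ (fun y => h (r y)) = ord₀ h := by
  obtain ⟨s, hs, hsrep⟩ := exists_factor hr 1 (by
    intro k hk
    interval_cases k
    simpa using hr0)
  have hs0 : s 0 = deriv r 0 := by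
    have hT := iter_id_mul hs 0
    have hsrep' : r = fun y => y * s y := by
      rw [hsrep]; funext y; ring
    rw [← hsrep'] at hT
    rw [iteratedDeriv_one] at hT
    simpa using hT.symm
  have hcomp : AnalyticAt ℂ (fun y => h (r y)) 0 := by
    have := hh
    rw [← hr0] at this
    exact this.comp hr
  have hge : ∀ n : ℕ, (n : ℕ∞) ≤ ord₀ h → (n : ℕ∞) ≤ ord₀ (fun y => h (r y)) := by
    intro n hn
    obtain ⟨w, hw, hwrep⟩ := (ord0_ge_iff_factor hh).mp hn
    have hwr : AnalyticAt ℂ (fun y => w (r y)) 0 := by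
      have := hw; rw [← hr0] at this; exact this.comp hr
    refine (ord0_ge_iff_factor hcomp).mpr ⟨fun y => s y ^ n * w (r y), (hs.pow n).mul hwr, ?_⟩
    funext y
    beta_reduce
    have hry : r y = y * s y := by rw [congrFun hsrep y]; ring
    rw [congrFun hwrep (r y), hry]
    ring
  cases hordh : ord₀ h with
  | top =>
    have htop : ord₀ (fun y => h (r y)) = ⊤ :=
      top_le_iff.mp (enat_le_of fun n _ => hge n (le_of_le_of_eq le_top hordh.symm))
    rw [htop]
  | coe n =>
    obtain ⟨w, hw, hw0, hwrep⟩ := (ord0_eq_coe_factor hh).mp hordh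
    have hwr : AnalyticAt ℂ (fun y => w (r y)) 0 := by
      have := hw; rw [← hr0] at this; exact this.comp hr
    refine (ord0_eq_coe_factor hcomp).mpr ⟨fun y => s y ^ n * w (r y), (hs.pow n).mul hwr, ?_, ?_⟩
    · simp only [hr0, hs0]
      exact mul_ne_zero (pow_ne_zero _ hr1) hw0
    · funext y
      beta_reduce
      have hry : r y = y * s y := by rw [congrFun hsrep y]; ring
      rw [congrFun hwrep (r y), hry]
      ring

/-! ### two-variable machinery: directional derivatives and slices -/

variable {E : Type*} [NormedAddCommGroup E] [NormedSpace ℂ E] [CompleteSpace E]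

/-- directional derivative operator -/
noncomputable def DD (e : ℂ × ℂ) (F : ℂ × ℂ → E) : ℂ × ℂ → E := fun p => fderiv ℂ F p e

lemma analyticAt_DD (e : ℂ × ℂ) {F : ℂ × ℂ → E} {p : ℂ × ℂ} (hF : AnalyticAt ℂ F p) :
    AnalyticAt ℂ (DD e F) p :=
  ((ContinuousLinearMap.apply ℂ E e).analyticAt _).comp hF.fderiv

lemma hasDerivAt_slice_snd {F : ℂ × ℂ → E} {a b : ℂ} (hF : DifferentiableAt ℂ F (a, b)) :
    HasDerivAt (fun y => F (a, y)) (DD (0, 1) F (a, b)) b := by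
  have hc : HasDerivAt (fun y : ℂ => ((a : ℂ), y)) (((0 : ℂ), (1 : ℂ)) : ℂ × ℂ) b :=
    (hasDerivAt_const b a).prodMk (hasDerivAt_id b)
  exact hF.hasFDerivAt.comp_hasDerivAt b hc

lemma hasDerivAt_slice_fst {F : ℂ × ℂ → E} {a b : ℂ} (hF : DifferentiableAt ℂ F (a, b)) :
    HasDerivAt (fun v => F (v, b)) (DD (1, 0) F (a, b)) a := by
  have hc : HasDerivAt (fun v : ℂ => (v, (b : ℂ))) (((1 : ℂ), (0 : ℂ)) : ℂ × ℂ) a :=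
    (hasDerivAt_id a).prodMk (hasDerivAt_const a b)
  exact hF.hasFDerivAt.comp_hasDerivAt a hc

lemma fderiv_apply_decomp {F : ℂ × ℂ → ℂ} {p : ℂ × ℂ} (a b : ℂ) :
    fderiv ℂ F p (a, b) = a * DD (1, 0) F p + b * DD (0, 1) F p := by
  have h : ((a, b) : ℂ × ℂ) = a • (((1 : ℂ), (0 : ℂ)) : ℂ × ℂ) + b • (((0 : ℂ), (1 : ℂ)) : ℂ × ℂ) := by
    simp [Prod.ext_iff]
  rw [h, map_add, map_smul, map_smul, smul_eq_mul, smul_eq_mul]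
  rfl

lemma eventually_analyticAt_slice {F : ℂ × ℂ → E} {a : ℂ} (hF : AnalyticAt ℂ F (a, 0)) :
    ∀ᶠ y in 𝓝 (0 : ℂ), AnalyticAt ℂ F (a, y) := by
  have h1 := hF.eventually_analyticAt
  have hc : Filter.Tendsto (fun y : ℂ => ((a : ℂ), y)) (𝓝 0) (𝓝 ((a : ℂ), (0 : ℂ))) :=
    Continuous.tendsto (by fun_prop) 0
  exact hc.eventually h1

lemma eventually_analyticAt_base {F : ℂ × ℂ → E} {v₀ : ℂ} (hF : AnalyticAt ℂ F (v₀, 0)) :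
    ∀ᶠ v in 𝓝 v₀, AnalyticAt ℂ F (v, 0) := by
  have h1 := hF.eventually_analyticAt
  have hc : Filter.Tendsto (fun v : ℂ => (v, (0 : ℂ))) (𝓝 v₀) (𝓝 ((v₀ : ℂ), (0 : ℂ))) :=
    Continuous.tendsto (by fun_prop) v₀
  exact hc.eventually h1

lemma iter_slice {F : ℂ × ℂ → ℂ} {a : ℂ} (hF : AnalyticAt ℂ F (a, 0)) (k : ℕ) :
    iteratedDeriv (k + 1) (fun y => F (a, y)) 0
      = iteratedDeriv k (fun y => DD (0, 1) F (a, y)) 0 := by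
  rw [iteratedDeriv_succ']
  refine Filter.EventuallyEq.iteratedDeriv_eq k ?_
  filter_upwards [eventually_analyticAt_slice hF] with y hy
  exact (hasDerivAt_slice_snd hy.differentiableAt).deriv

lemma DyI_analytic (k : ℕ) {F : ℂ × ℂ → ℂ} {p : ℂ × ℂ} (hF : AnalyticAt ℂ F p) :
    AnalyticAt ℂ ((DD (0, 1))^[k] F) p := by
  induction k generalizing F with
  | zero => exact hF
  | succ k ih =>
    rw [Function.iterate_succ_apply]
    exact ih (analyticAt_DD _ hF)

lemma iter_slice_iterate {F : ℂ × ℂ → ℂ} {a : ℂ} (hF : AnalyticAt ℂ F (a, 0)) (k : ℕ) :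
    iteratedDeriv k (fun y => F (a, y)) 0 = ((DD (0, 1))^[k] F) (a, 0) := by
  induction k generalizing F with
  | zero => simp
  | succ k ih =>
    rw [iter_slice hF k, ih (analyticAt_DD _ hF), Function.iterate_succ_apply]

lemma analyticAt_coeff {F : ℂ × ℂ → ℂ} {v₀ : ℂ} (hF : AnalyticAt ℂ F (v₀, 0)) (k : ℕ) :
    AnalyticAt ℂ (fun v => iteratedDeriv k (fun y => F (v, y)) 0) v₀ := by
  have hit : AnalyticAt ℂ (fun v => ((DD (0, 1))^[k] F) (v, 0)) v₀ := by
    have h1 : AnalyticAt ℂ ((DD (0, 1))^[k] F) (v₀, 0) := DyI_analytic k hF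
    have h2 : AnalyticAt ℂ (fun v : ℂ => (v, (0 : ℂ))) v₀ := analyticAt_id.prod analyticAt_const
    exact AnalyticAt.comp (f := fun v : ℂ => (v, (0 : ℂ))) h1 h2
  refine hit.congr ?_
  filter_upwards [eventually_analyticAt_base hF] with v hv
  exact (iter_slice_iterate hv k).symm

lemma swap_DD {F : ℂ × ℂ → ℂ} {p : ℂ × ℂ} (hF : AnalyticAt ℂ F p) :
    DD (1, 0) (DD (0, 1) F) p = DD (0, 1) (DD (1, 0) F) p := by
  have hev : ∀ᶠ q in 𝓝 p, HasFDerivAt F (fderiv ℂ F q) q := by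
    filter_upwards [hF.eventually_analyticAt] with q hq
    exact hq.differentiableAt.hasFDerivAt
  have hx : HasFDerivAt (fderiv ℂ F) (fderiv ℂ (fderiv ℂ F) p) p :=
    hF.fderiv.differentiableAt.hasFDerivAt
  have hsymm := second_derivative_symmetric_of_eventually hev hx
    (((1 : ℂ), (0 : ℂ)) : ℂ × ℂ) (((0 : ℂ), (1 : ℂ)) : ℂ × ℂ)
  have h1 : DD (1, 0) (DD (0, 1) F) p
      = fderiv ℂ (fderiv ℂ F) p (((1 : ℂ), (0 : ℂ)) : ℂ × ℂ) (((0 : ℂ), (1 : ℂ)) : ℂ × ℂ) := by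
    have hd : fderiv ℂ (DD ((0 : ℂ), (1 : ℂ)) F) p
        = (ContinuousLinearMap.apply ℂ ℂ (((0 : ℂ), (1 : ℂ)) : ℂ × ℂ)).comp
            (fderiv ℂ (fderiv ℂ F) p) :=
      (((ContinuousLinearMap.apply ℂ ℂ (((0 : ℂ), (1 : ℂ)) : ℂ × ℂ)).hasFDerivAt).comp p hx).fderiv
    show fderiv ℂ (DD (0, 1) F) p (1, 0) = _
    rw [hd]
    rfl
  have h2 : DD (0, 1) (DD (1, 0) F) p
      = fderiv ℂ (fderiv ℂ F) p (((0 : ℂ), (1 : ℂ)) : ℂ × ℂ) (((1 : ℂ), (0 : ℂ)) : ℂ × ℂ) := by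
    have hd : fderiv ℂ (DD ((1 : ℂ), (0 : ℂ)) F) p
        = (ContinuousLinearMap.apply ℂ ℂ (((1 : ℂ), (0 : ℂ)) : ℂ × ℂ)).comp
            (fderiv ℂ (fderiv ℂ F) p) :=
      (((ContinuousLinearMap.apply ℂ ℂ (((1 : ℂ), (0 : ℂ)) : ℂ × ℂ)).hasFDerivAt).comp p hx).fderiv
    show fderiv ℂ (DD (1, 0) F) p (0, 1) = _
    rw [hd]
    rfl
  rw [h1, h2, hsymm]

lemma hasDerivAt_coeff {F : ℂ × ℂ → ℂ} {v₀ : ℂ} (hF : AnalyticAt ℂ F (v₀, 0)) (k : ℕ) :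
    ∀ᶠ v in 𝓝 v₀, HasDerivAt (fun v' => iteratedDeriv k (fun y => F (v', y)) 0)
      (iteratedDeriv k (fun y => DD (1, 0) F (v, y)) 0) v := by
  induction k generalizing F with
  | zero =>
    filter_upwards [eventually_analyticAt_base hF] with v hv
    simp only [iteratedDeriv_zero]
    exact hasDerivAt_slice_fst hv.differentiableAt
  | succ k ih =>
    have hfeq : (fun v' => iteratedDeriv (k + 1) (fun y => F (v', y)) 0)
        =ᶠ[𝓝 v₀] fun v' => iteratedDeriv k (fun y => DD (0, 1) F (v', y)) 0 := by
      filter_upwards [eventually_analyticAt_base hF] with v hv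
      exact iter_slice hv k
    have ihDy := ih (analyticAt_DD (0, 1) hF)
    have hprod : ∀ᶠ v in 𝓝 v₀, ∀ᶠ y in 𝓝 (0 : ℂ), AnalyticAt ℂ F (v, y) := by
      have h1 := hF.eventually_analyticAt
      rw [nhds_prod_eq] at h1
      exact h1.curry
    have hswap : ∀ᶠ v in 𝓝 v₀,
        iteratedDeriv k (fun y => DD (1, 0) (DD (0, 1) F) (v, y)) 0
          = iteratedDeriv (k + 1) (fun y => DD (1, 0) F (v, y)) 0 := by
      filter_upwards [hprod, eventually_analyticAt_base hF] with v hv hv0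
      have h1 : (fun y => DD (1, 0) (DD (0, 1) F) (v, y))
          =ᶠ[𝓝 (0 : ℂ)] fun y => DD (0, 1) (DD (1, 0) F) (v, y) := by
        filter_upwards [hv] with y hy
        exact swap_DD hy
      rw [Filter.EventuallyEq.iteratedDeriv_eq k h1, ← iter_slice (analyticAt_DD (1, 0) hv0) k]
    filter_upwards [ihDy, hswap, hfeq.eventually_nhds] with v hih hsw hlocal
    rw [hsw] at hih
    have hlocal' : (fun v' => iteratedDeriv (k + 1) (fun y => F (v', y)) 0)
        =ᶠ[𝓝 v] fun v' => iteratedDeriv k (fun y => DD (0, 1) F (v', y)) 0 := hlocal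
    exact hih.congr_of_eventuallyEq hlocal'

/-! ### derivative along an analytic curve -/

lemma hasDerivAt_curve {F : ℂ × ℂ → ℂ} {vt : ℂ → ℂ} {y : ℂ}
    (hF : DifferentiableAt ℂ F (vt y, y)) (hvt : DifferentiableAt ℂ vt y) :
    HasDerivAt (fun t => F (vt t, t))
      (deriv vt y * DD (1, 0) F (vt y, y) + DD (0, 1) F (vt y, y)) y := by
  have hc : HasDerivAt (fun t : ℂ => (vt t, t)) ((deriv vt y, 1) : ℂ × ℂ) y :=
    hvt.hasDerivAt.prodMk (hasDerivAt_id y)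
  have h : HasDerivAt (fun t => F (vt t, t))
      (fderiv ℂ F (vt y, y) ((deriv vt y, 1) : ℂ × ℂ)) y :=
    hF.hasFDerivAt.comp_hasDerivAt_of_eq y hc rfl
  rwa [fderiv_apply_decomp, one_mul] at h

/-! ### the key tail lemma -/

lemma tail_claim (k : ℕ) :
    ∀ (F : ℂ × ℂ → ℂ) (vt : ℂ → ℂ) (v₀ : ℂ),
      AnalyticAt ℂ F (v₀, 0) → AnalyticAt ℂ vt 0 → vt 0 = v₀ →
      (∀ᶠ v in 𝓝 v₀, ∀ j ≤ k, iteratedDeriv j (fun y => F (v, y)) 0 = 0) →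
      ∀ j ≤ k, iteratedDeriv j (fun y => F (vt y, y)) 0 = 0 := by
  induction k with
  | zero =>
    intro F vt v₀ hF hvt hvt0 hvan j hj
    interval_cases j
    have h0 := hvan.self_of_nhds 0 le_rfl
    simp only [iteratedDeriv_zero] at h0 ⊢
    rw [hvt0]
    exact h0
  | succ k ih =>
    intro F vt v₀ hF hvt hvt0 hvan j hj
    by_cases hjk : j ≤ k
    · exact ih F vt v₀ hF hvt hvt0
        (hvan.mono fun v hv j' hj' => hv j' (hj'.trans (Nat.le_succ k))) j hjk
    · have hj' : j = k + 1 := by omega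
      subst hj'
      have hγ : AnalyticAt ℂ (fun y => (vt y, y)) 0 := hvt.prod analyticAt_id
      have hγ0 : ((vt 0 : ℂ), (0 : ℂ)) = ((v₀ : ℂ), (0 : ℂ)) := by rw [hvt0]
      have hDu : AnalyticAt ℂ (DD (1, 0) F) (vt 0, 0) := hγ0 ▸ analyticAt_DD _ hF
      have hDy : AnalyticAt ℂ (DD (0, 1) F) (vt 0, 0) := hγ0 ▸ analyticAt_DD _ hF
      have hDucurve : AnalyticAt ℂ (fun y => DD (1, 0) F (vt y, y)) 0 :=
        AnalyticAt.comp (f := fun y => (vt y, y)) hDu hγ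
      have hDycurve : AnalyticAt ℂ (fun y => DD (0, 1) F (vt y, y)) 0 :=
        AnalyticAt.comp (f := fun y => (vt y, y)) hDy hγ
      have hcurve_ev : ∀ᶠ y in 𝓝 (0 : ℂ), AnalyticAt ℂ F (vt y, y) := by
        have ht : Filter.Tendsto (fun y => (vt y, y)) (𝓝 (0 : ℂ)) (𝓝 ((v₀ : ℂ), (0 : ℂ))) := by
          have := hγ.continuousAt
          rwa [ContinuousAt, hγ0] at this
        exact ht.eventually hF.eventually_analyticAt
      have hderiv : (deriv fun y => F (vt y, y)) =ᶠ[𝓝 (0 : ℂ)]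
          fun y => deriv vt y * DD (1, 0) F (vt y, y) + DD (0, 1) F (vt y, y) := by
        filter_upwards [hcurve_ev, hvt.eventually_analyticAt] with y hy1 hy2
        exact (hasDerivAt_curve hy1.differentiableAt hy2.differentiableAt).deriv
      rw [iteratedDeriv_succ', Filter.EventuallyEq.iteratedDeriv_eq k hderiv]
      have hT1an : AnalyticAt ℂ (fun y => deriv vt y * DD (1, 0) F (vt y, y)) 0 :=
        (analyticAt_deriv hvt).mul hDucurve
      rw [iter_add hT1an hDycurve]
      -- second term vanishes by the inductive hypothesis applied to `DD (0,1) F`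
      have hvanDy : ∀ᶠ v in 𝓝 v₀, ∀ j ≤ k,
          iteratedDeriv j (fun y => DD (0, 1) F (v, y)) 0 = 0 := by
        filter_upwards [hvan, eventually_analyticAt_base hF] with v hv hva
        intro j hjk2
        rw [← iter_slice hva j]
        exact hv (j + 1) (by omega)
      have h2 := ih (DD (0, 1) F) vt v₀ (analyticAt_DD _ hF) hvt hvt0 hvanDy k le_rfl
      -- first term: `DD (1,0) F` along the curve vanishes to order `k+1`
      have hvanDu : ∀ᶠ v in 𝓝 v₀, ∀ j ≤ k,
          iteratedDeriv j (fun y => DD (1, 0) F (v, y)) 0 = 0 := by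
        rw [show (fun v => ∀ j ≤ k, iteratedDeriv j (fun y => DD (1, 0) F (v, y)) 0 = 0)
            = fun v => ∀ j ∈ Finset.range (k + 1),
                iteratedDeriv j (fun y => DD (1, 0) F (v, y)) 0 = 0 by
          funext v
          simp only [Finset.mem_range, Nat.lt_succ_iff]]
        rw [Filter.eventually_all_finset]
        intro j hjmem
        rw [Finset.mem_range, Nat.lt_succ_iff] at hjmem
        filter_upwards [hasDerivAt_coeff hF j, hvan.eventually_nhds] with v hvd hvloc
        have hzero : (fun v' => iteratedDeriv j (fun y => F (v', y)) 0) =ᶠ[𝓝 v]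
            fun _ => (0 : ℂ) := by
          filter_upwards [hvloc] with v' h using h j (hjmem.trans (Nat.le_succ k))
        have hconst : HasDerivAt (fun v' => iteratedDeriv j (fun y => F (v', y)) 0) 0 v :=
          (hasDerivAt_const v (0 : ℂ)).congr_of_eventuallyEq hzero
        exact hvd.unique hconst
      have h1vals := ih (DD (1, 0) F) vt v₀ (analyticAt_DD _ hF) hvt hvt0 hvanDu
      obtain ⟨w, hw, hwrep⟩ := exists_factor hDucurve (k + 1)
        (fun j hj2 => h1vals j (by omega))
      have hterm1 : iteratedDeriv k (fun y => deriv vt y * DD (1, 0) F (vt y, y)) 0 = 0 := by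
        have hrw : (fun y => deriv vt y * DD (1, 0) F (vt y, y))
            = fun y => y ^ (k + 1) * (deriv vt y * w y) := by
          funext y
          rw [congrFun hwrep y]
          ring
        rw [hrw]
        exact iter_pow_mul ((analyticAt_deriv hvt).mul hw) (by omega)
      rw [hterm1, h2, add_zero]

/-! ### low coefficients do not depend on the perturbation parameter -/

lemma diffq {W : ℂ × ℂ → ℂ} {α : ℂ → ℂ} (hW : AnalyticAt ℂ W ((0 : ℂ), (0 : ℂ)))
    (hα : AnalyticAt ℂ α 0) (hα0 : α 0 = 0) {q : ℕ} (hq : 1 ≤ q) (u : ℂ) {k : ℕ} (hk : k < q) :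
    iteratedDeriv k (fun y => W (α y + u * y ^ q, y)) 0
      = iteratedDeriv k (fun y => W (α y + 0 * y ^ q, y)) 0 := by
  have hq0 : q ≠ 0 := by omega
  set H : ℂ × ℂ → ℂ := fun p => W (α p.2 + p.1 * p.2 ^ q, p.2) with hH
  have hHan : ∀ v₀ : ℂ, AnalyticAt ℂ H (v₀, 0) := by
    intro v₀
    have hθ : AnalyticAt ℂ (fun p : ℂ × ℂ => (α p.2 + p.1 * p.2 ^ q, p.2)) (v₀, 0) := by
      apply AnalyticAt.prod
      · have hα2 : AnalyticAt ℂ (fun p : ℂ × ℂ => α p.2) (v₀, 0) :=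
          AnalyticAt.comp (f := fun p : ℂ × ℂ => p.2) hα analyticAt_snd
        exact hα2.add (analyticAt_fst.mul (analyticAt_snd.pow q))
      · exact analyticAt_snd
    have hWat : AnalyticAt ℂ W
        ((fun p : ℂ × ℂ => (α p.2 + p.1 * p.2 ^ q, p.2)) ((v₀ : ℂ), (0 : ℂ))) := by
      simpa [hα0, zero_pow hq0] using hW
    exact AnalyticAt.comp (f := fun p : ℂ × ℂ => (α p.2 + p.1 * p.2 ^ q, p.2)) hWat hθ
  have hder : ∀ v : ℂ, HasDerivAt (fun v' => iteratedDeriv k (fun y => H (v', y)) 0) 0 v := by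
    intro v
    have h1 := (hasDerivAt_coeff (hHan v) k).self_of_nhds
    have hWcurve_ev : ∀ᶠ y in 𝓝 (0 : ℂ), AnalyticAt ℂ W (α y + v * y ^ q, y) := by
      have hcont : Filter.Tendsto (fun y : ℂ => ((α y + v * y ^ q : ℂ), y)) (𝓝 0)
          (𝓝 ((0 : ℂ), (0 : ℂ))) := by
        have hcγ : AnalyticAt ℂ (fun y : ℂ => ((α y + v * y ^ q : ℂ), y)) 0 :=
          ((hα.add ((analyticAt_const).mul (analyticAt_id.pow q))).prod analyticAt_id)
        have := hcγ.continuousAt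
        rwa [ContinuousAt, show ((α 0 + v * 0 ^ q : ℂ), (0 : ℂ)) = ((0 : ℂ), (0 : ℂ)) by
          simp [hα0, zero_pow hq0]] at this
      exact hcont.eventually hW.eventually_analyticAt
    have h2 : (fun y => DD (1, 0) H (v, y)) =ᶠ[𝓝 (0 : ℂ)]
        fun y => y ^ q * DD (1, 0) W (α y + v * y ^ q, y) := by
      filter_upwards [hWcurve_ev, eventually_analyticAt_slice (hHan v)] with y hyW hyH
      have hinner : HasDerivAt (fun v' : ℂ => α y + v' * y ^ q) (y ^ q) v := by
        simpa using (HasDerivAt.const_add (α y) ((hasDerivAt_id v).mul_const (y ^ q)))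
      have houter : HasDerivAt (fun x => W (x, y))
          (DD (1, 0) W (α y + v * y ^ q, y)) (α y + v * y ^ q) :=
        hasDerivAt_slice_fst hyW.differentiableAt
      have hcomp := houter.comp v hinner
      have hslice : HasDerivAt (fun v' => H (v', y)) (DD (1, 0) H (v, y)) v :=
        hasDerivAt_slice_fst hyH.differentiableAt
      have := hslice.unique hcomp
      rw [this]
      ring
    have h3 : iteratedDeriv k (fun y => DD (1, 0) H (v, y)) 0 = 0 := by
      rw [Filter.EventuallyEq.iteratedDeriv_eq k h2]
      have hDuWcurve : AnalyticAt ℂ (fun y => DD (1, 0) W (α y + v * y ^ q, y)) 0 := by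
        have hcγ : AnalyticAt ℂ (fun y : ℂ => ((α y + v * y ^ q : ℂ), y)) 0 :=
          ((hα.add ((analyticAt_const).mul (analyticAt_id.pow q))).prod analyticAt_id)
        have hDuW : AnalyticAt ℂ (DD (1, 0) W)
            (((α 0 + v * 0 ^ q : ℂ), (0 : ℂ))) := by
          have := analyticAt_DD ((1 : ℂ), (0 : ℂ)) hW
          rwa [show ((α 0 + v * 0 ^ q : ℂ), (0 : ℂ)) = ((0 : ℂ), (0 : ℂ)) by
            simp [hα0, zero_pow hq0]]
        exact AnalyticAt.comp (f := fun y : ℂ => ((α y + v * y ^ q : ℂ), y)) hDuW hcγ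
      exact iter_pow_mul hDuWcurve hk
    rwa [h3] at h1
  have hdiff : Differentiable ℂ (fun v' => iteratedDeriv k (fun y => H (v', y)) 0) :=
    fun v => (hder v).differentiableAt
  exact is_const_of_deriv_eq_zero hdiff (fun v => (hder v).deriv) u 0

/-! ### identity theorem helper -/

lemma exists_common_ne {C c1 : ℂ → ℂ} (hC : ∀ z, AnalyticAt ℂ C z) (hc1 : ∀ z, AnalyticAt ℂ c1 z)
    {z₁ z₂ : ℂ} (h1 : C z₁ ≠ 0) (h2 : c1 z₂ ≠ 0) : ∃ u, C u ≠ 0 ∧ c1 u ≠ 0 := by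
  by_contra h
  push_neg at h
  have hev : c1 =ᶠ[𝓝 z₁] 0 := by
    have hne : ∀ᶠ u in 𝓝 z₁, C u ≠ 0 := (hC z₁).continuousAt.eventually_ne h1
    filter_upwards [hne] with u hu using h u hu
  have heq : Set.EqOn c1 0 Set.univ :=
    AnalyticOnNhd.eqOn_zero_of_preconnected_of_eventuallyEq_zero
      (fun z _ => hc1 z) isPreconnected_univ (Set.mem_univ z₁) hev
  exact h2 (heq (Set.mem_univ z₂))

/-! ### ℕ∞ infimum attainment -/

lemma exists_eq_of_iInf {ι : Type*} [Nonempty ι] {f : ι → ℕ∞} {N : ℕ}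
    (h : ⨅ i, f i = (N : ℕ∞)) : ∃ i, f i = (N : ℕ∞) := by
  have hlt : ⨅ i, f i < (N : ℕ∞) + 1 := by
    rw [h]
    exact_mod_cast Nat.lt_succ_self N
  obtain ⟨i, hi⟩ := iInf_lt_iff.mp hlt
  refine ⟨i, le_antisymm ?_ (h ▸ iInf_le f i)⟩
  cases hfi : f i with
  | top => rw [hfi] at hi; exact absurd hi (by simp)
  | coe m =>
    rw [hfi] at hi
    have hm : m < N + 1 := by exact_mod_cast hi
    exact_mod_cast (by omega : m ≤ N)

/-! ### more helpers -/

lemma factor_one {r : ℂ → ℂ} (hr : AnalyticAt ℂ r 0) (hr0 : r 0 = 0) :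
    ∃ s, AnalyticAt ℂ s 0 ∧ s 0 = deriv r 0 ∧ r = fun y => y * s y := by
  obtain ⟨s, hs, hsrep⟩ := exists_factor hr 1 (by
    intro k hk
    interval_cases k
    simpa using hr0)
  have hsrep' : r = fun y => y * s y := by
    rw [hsrep]; funext y; ring
  refine ⟨s, hs, ?_, hsrep'⟩
  have hT := iter_id_mul hs 0
  rw [← hsrep', iteratedDeriv_one] at hT
  simpa using hT.symm

lemma tendsto_curve {γ : ℂ → ℂ × ℂ} (hγ : AnalyticAt ℂ γ 0) {P : ℂ × ℂ} (hP : γ 0 = P) :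
    Filter.Tendsto γ (𝓝 (0 : ℂ)) (𝓝 P) := by
  have := hγ.continuousAt
  rwa [ContinuousAt, hP] at this

lemma eventually_mem_curve {γ : ℂ → ℂ × ℂ} (hγ : AnalyticAt ℂ γ 0) {P : ℂ × ℂ}
    (hP : γ 0 = P) {S : Set (ℂ × ℂ)} (hS : IsOpen S) (hPS : P ∈ S) :
    ∀ᶠ y in 𝓝 (0 : ℂ), γ y ∈ S :=
  (tendsto_curve hγ hP).eventually (hS.eventually_mem hPS)

lemma fst_an {h : ℂ → ℂ × ℂ} (hh : AnalyticAt ℂ h 0) : AnalyticAt ℂ (fun y => (h y).1) 0 :=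
  AnalyticAt.comp (f := h) analyticAt_fst hh

lemma snd_an {h : ℂ → ℂ × ℂ} (hh : AnalyticAt ℂ h 0) : AnalyticAt ℂ (fun y => (h y).2) 0 :=
  AnalyticAt.comp (f := h) analyticAt_snd hh

lemma analyticAt_comp_curve {F : ℂ × ℂ → E} {γ : ℂ → ℂ × ℂ} (hγ : AnalyticAt ℂ γ 0)
    {P : ℂ × ℂ} (hP : γ 0 = P) (hF : AnalyticAt ℂ F P) :
    AnalyticAt ℂ (fun y => F (γ y)) 0 := by
  have hF' : AnalyticAt ℂ F (γ 0) := hP ▸ hF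
  exact AnalyticAt.comp (f := γ) hF' hγ

/-! ### invariance of the minimum gradient order under the biholomorphism (chain rule) -/

lemma chain_min
    (U V : Set (ℂ × ℂ)) (hUopen : IsOpen U) (hVopen : IsOpen V)
    (φ φinv : ℂ × ℂ → ℂ × ℂ)
    (hφ : ∀ p ∈ U, AnalyticAt ℂ φ p) (hφinv : ∀ p ∈ V, AnalyticAt ℂ φinv p)
    (hφUV : Set.MapsTo φ U V)
    (hleft : ∀ p ∈ U, φinv (φ p) = p) (hright : ∀ p ∈ V, φ (φinv p) = p)
    (g : ℂ × ℂ → ℂ) (hg : ∀ p ∈ V, AnalyticAt ℂ g p)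
    (γ : ℂ → ℂ × ℂ) (hγ : AnalyticAt ℂ γ 0) (hγ0 : γ 0 = ((0 : ℂ), (0 : ℂ)))
    (h0U : ((0 : ℂ), (0 : ℂ)) ∈ U) :
    min (ord₀ fun y => fderiv ℂ (fun p => g (φ p)) (γ y) (1, 0))
        (ord₀ fun y => fderiv ℂ (fun p => g (φ p)) (γ y) (0, 1))
      = min (ord₀ fun y => fderiv ℂ g (φ (γ y)) (1, 0))
            (ord₀ fun y => fderiv ℂ g (φ (γ y)) (0, 1)) := by
  have h0V : φ ((0 : ℂ), (0 : ℂ)) ∈ V := hφUV h0U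
  have hγU : ∀ᶠ y in 𝓝 (0 : ℂ), γ y ∈ U := eventually_mem_curve hγ hγ0 hUopen h0U
  have hφγ : AnalyticAt ℂ (fun y => φ (γ y)) 0 := analyticAt_comp_curve hγ hγ0 (hφ _ h0U)
  have hφγ0 : (fun y => φ (γ y)) 0 = φ ((0 : ℂ), (0 : ℂ)) := by
    show φ (γ 0) = _
    rw [hγ0]
  -- the four analytic coefficient families
  have hgV : AnalyticAt ℂ g (φ ((0 : ℂ), (0 : ℂ))) := hg _ h0V
  have ha : AnalyticAt ℂ (fun y => fderiv ℂ g (φ (γ y)) (1, 0)) 0 :=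
    analyticAt_comp_curve hφγ hφγ0 (analyticAt_DD _ hgV)
  have hb : AnalyticAt ℂ (fun y => fderiv ℂ g (φ (γ y)) (0, 1)) 0 :=
    analyticAt_comp_curve hφγ hφγ0 (analyticAt_DD _ hgV)
  have hϝ : AnalyticAt ℂ (fun p => g (φ p)) ((0 : ℂ), (0 : ℂ)) := by
    exact AnalyticAt.comp (f := φ) hgV (hφ _ h0U)
  have hF1 : AnalyticAt ℂ (fun y => fderiv ℂ (fun p => g (φ p)) (γ y) (1, 0)) 0 :=
    analyticAt_comp_curve hγ hγ0 (analyticAt_DD _ hϝ)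
  have hF2 : AnalyticAt ℂ (fun y => fderiv ℂ (fun p => g (φ p)) (γ y) (0, 1)) 0 :=
    analyticAt_comp_curve hγ hγ0 (analyticAt_DD _ hϝ)
  -- matrix entries
  have hm : ∀ e : ℂ × ℂ, AnalyticAt ℂ (fun y => fderiv ℂ φ (γ y) e) 0 := fun e =>
    analyticAt_comp_curve hγ hγ0 (analyticAt_DD e (hφ _ h0U))
  have hn : ∀ e : ℂ × ℂ, AnalyticAt ℂ (fun y => fderiv ℂ φinv (φ (γ y)) e) 0 := fun e =>
    analyticAt_comp_curve hφγ hφγ0 (analyticAt_DD e (hφinv _ h0V))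
  -- forward chain rule
  have hforward : ∀ e : ℂ × ℂ, (fun y => fderiv ℂ (fun p => g (φ p)) (γ y) e) =ᶠ[𝓝 (0 : ℂ)]
      fun y => (fderiv ℂ φ (γ y) e).1 * fderiv ℂ g (φ (γ y)) (1, 0)
        + (fderiv ℂ φ (γ y) e).2 * fderiv ℂ g (φ (γ y)) (0, 1) := by
    intro e
    filter_upwards [hγU] with y hy
    have hdφ : DifferentiableAt ℂ φ (γ y) := (hφ _ hy).differentiableAt
    have hdg : DifferentiableAt ℂ g (φ (γ y)) := (hg _ (hφUV hy)).differentiableAt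
    have hcomp : fderiv ℂ (fun p => g (φ p)) (γ y)
        = (fderiv ℂ g (φ (γ y))).comp (fderiv ℂ φ (γ y)) := fderiv_comp _ hdg hdφ
    have : fderiv ℂ (fun p => g (φ p)) (γ y) e
        = fderiv ℂ g (φ (γ y)) (fderiv ℂ φ (γ y) e) := by rw [hcomp]; rfl
    rw [this]
    exact fderiv_apply_decomp (fderiv ℂ φ (γ y) e).1 (fderiv ℂ φ (γ y) e).2
  -- backward chain rule
  have hbackward : ∀ e : ℂ × ℂ, (fun y => fderiv ℂ g (φ (γ y)) e) =ᶠ[𝓝 (0 : ℂ)]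
      fun y => (fderiv ℂ φinv (φ (γ y)) e).1 * fderiv ℂ (fun p => g (φ p)) (γ y) (1, 0)
        + (fderiv ℂ φinv (φ (γ y)) e).2 * fderiv ℂ (fun p => g (φ p)) (γ y) (0, 1) := by
    intro e
    filter_upwards [hγU] with y hy
    have hyV : φ (γ y) ∈ V := hφUV hy
    have hdφinv : DifferentiableAt ℂ φinv (φ (γ y)) := (hφinv _ hyV).differentiableAt
    have hdϝ : DifferentiableAt ℂ (fun p => g (φ p)) (φinv (φ (γ y))) := by
      rw [hleft _ hy]
      have : AnalyticAt ℂ (fun p => g (φ p)) (γ y) :=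
        AnalyticAt.comp (f := φ) (hg _ hyV) (hφ _ hy)
      exact this.differentiableAt
    have hgeq : g =ᶠ[𝓝 (φ (γ y))] fun p => (fun p' => g (φ p')) (φinv p) := by
      filter_upwards [hVopen.eventually_mem hyV] with p hp
      show g p = g (φ (φinv p))
      rw [hright _ hp]
    have hstep : fderiv ℂ g (φ (γ y)) = fderiv ℂ (fun p => (fun p' => g (φ p')) (φinv p))
        (φ (γ y)) := hgeq.fderiv_eq
    have hcomp : fderiv ℂ (fun p => (fun p' => g (φ p')) (φinv p)) (φ (γ y))
        = (fderiv ℂ (fun p => g (φ p)) (φinv (φ (γ y)))).comp (fderiv ℂ φinv (φ (γ y))) :=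
      fderiv_comp _ hdϝ hdφinv
    have : fderiv ℂ g (φ (γ y)) e
        = fderiv ℂ (fun p => g (φ p)) (γ y) (fderiv ℂ φinv (φ (γ y)) e) := by
      rw [hstep, hcomp]
      have : fderiv ℂ (fun p => g (φ p)) (φinv (φ (γ y)))
          = fderiv ℂ (fun p => g (φ p)) (γ y) := by rw [hleft _ hy]
      rw [this]
      rfl
    rw [this]
    exact fderiv_apply_decomp (fderiv ℂ φinv (φ (γ y)) e).1 (fderiv ℂ φinv (φ (γ y)) e).2
  -- order comparison, generic direction
  have hdir : ∀ (A a2 b2 : ℂ → ℂ) (m1 m2 : ℂ → ℂ),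
      AnalyticAt ℂ a2 0 → AnalyticAt ℂ b2 0 → AnalyticAt ℂ m1 0 → AnalyticAt ℂ m2 0 →
      A =ᶠ[𝓝 (0 : ℂ)] (fun y => m1 y * a2 y + m2 y * b2 y) →
      min (ord₀ a2) (ord₀ b2) ≤ ord₀ A := by
    intro A a2 b2 m1 m2 ha2 hb2 hm1 hm2 hrep
    rw [ord0_congr hrep]
    calc min (ord₀ a2) (ord₀ b2)
        ≤ min (ord₀ fun y => m1 y * a2 y) (ord₀ fun y => m2 y * b2 y) :=
          min_le_min (ord0_le_mul_left hm1 ha2) (ord0_le_mul_left hm2 hb2)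
      _ ≤ ord₀ (fun y => m1 y * a2 y + m2 y * b2 y) :=
          ord0_min_le_add (hm1.mul ha2) (hm2.mul hb2)
  apply le_antisymm
  · apply le_min
    · exact hdir _ _ _ _ _ hF1 hF2
        (fst_an (hn (1, 0))) (snd_an (hn (1, 0))) (hbackward (1, 0))
    · exact hdir _ _ _ _ _ hF1 hF2
        (fst_an (hn (0, 1))) (snd_an (hn (0, 1))) (hbackward (0, 1))
  · apply le_min
    · exact hdir _ _ _ _ _ ha hb
        (fst_an (hm (1, 0))) (snd_an (hm (1, 0))) (hforward (1, 0))
    · exact hdir _ _ _ _ _ ha hb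
        (fst_an (hm (0, 1))) (snd_an (hm (0, 1))) (hforward (0, 1))

/-! ### the perturbation-order bound along the transformed curve -/

lemma step2
    (V : Set (ℂ × ℂ)) (hVopen : IsOpen V) (h0V : ((0 : ℂ), (0 : ℂ)) ∈ V)
    (g : ℂ × ℂ → ℂ) (hg : ∀ p ∈ V, AnalyticAt ℂ g p)
    (β : ℂ → ℂ) (hβan : AnalyticAt ℂ β 0) (hβ0 : β 0 = 0)
    (q : ℕ) (hq : 1 ≤ q)
    (P ψu : ℂ → ℂ) (hPan : AnalyticAt ℂ P 0) (hψuan : AnalyticAt ℂ ψu 0)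
    (hψu0 : ψu 0 = 0) (hψud : deriv ψu 0 ≠ 0)
    (hδ : ∀ k < q, iteratedDeriv k (fun y => P y - β (ψu y)) 0 = 0) :
    gradOrdPert g β q ≤ min (ord₀ fun y => fderiv ℂ g (P y, ψu y) (1, 0))
                            (ord₀ fun y => fderiv ℂ g (P y, ψu y) (0, 1)) := by
  have hq0 : q ≠ 0 := by omega
  have hβψu : AnalyticAt ℂ β (ψu 0) := by rw [hψu0]; exact hβan
  have hβψ : AnalyticAt ℂ (fun y => β (ψu y)) 0 := AnalyticAt.comp (f := ψu) hβψu hψuan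
  have hδan : AnalyticAt ℂ (fun y => P y - β (ψu y)) 0 := hPan.sub hβψ
  obtain ⟨w, hw, hwrep⟩ := exists_factor hδan q hδ
  obtain ⟨s, hs, hs0, hsrep⟩ := factor_one hψuan hψu0
  have hs0ne : s 0 ≠ 0 := by rw [hs0]; exact hψud
  set vt : ℂ → ℂ := fun y => w y * (s y ^ q)⁻¹ with hvt_def
  have hvtan : AnalyticAt ℂ vt 0 := hw.mul ((hs.pow q).inv (pow_ne_zero q hs0ne))
  have hptw : ∀ᶠ y in 𝓝 (0 : ℂ), P y = β (ψu y) + vt y * ψu y ^ q := by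
    have hsne : ∀ᶠ y in 𝓝 (0 : ℂ), s y ≠ 0 := hs.continuousAt.eventually_ne hs0ne
    filter_upwards [hsne] with y hsy
    have hδy : P y - β (ψu y) = y ^ q * w y := congrFun hwrep y
    have hψy : ψu y = y * s y := congrFun hsrep y
    have hvty : vt y * ψu y ^ q = y ^ q * w y := by
      show w y * (s y ^ q)⁻¹ * ψu y ^ q = _
      rw [hψy, mul_pow]
      field_simp
    rw [hvty]
    linear_combination hδy
  have main : ∀ e : ℂ × ℂ,
      (∀ v : ℂ, gradOrdPert g β q ≤ ord₀ (fun y => fderiv ℂ g (β y + v * y ^ q, y) e)) →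
      gradOrdPert g β q ≤ ord₀ (fun y => fderiv ℂ g (P y, ψu y) e) := by
    intro e hve
    set G2 : ℂ × ℂ → ℂ := fun p => fderiv ℂ g (β p.2 + p.1 * p.2 ^ q, p.2) e with hG2
    have hG2an : ∀ c : ℂ, AnalyticAt ℂ G2 (c, 0) := by
      intro c
      have hβ2 : AnalyticAt ℂ (fun p : ℂ × ℂ => β p.2) ((c : ℂ), (0 : ℂ)) :=
        AnalyticAt.comp (f := fun p : ℂ × ℂ => p.2) hβan analyticAt_snd
      have hinner : AnalyticAt ℂ
          (fun p : ℂ × ℂ => ((β p.2 + p.1 * p.2 ^ q : ℂ), p.2)) (c, 0) :=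
        (hβ2.add (analyticAt_fst.mul (analyticAt_snd.pow q))).prod analyticAt_snd
      have houter : AnalyticAt ℂ (DD e g)
          ((fun p : ℂ × ℂ => ((β p.2 + p.1 * p.2 ^ q : ℂ), p.2)) ((c : ℂ), (0 : ℂ))) := by
        have h00 : ((fun p : ℂ × ℂ => ((β p.2 + p.1 * p.2 ^ q : ℂ), p.2)) ((c : ℂ), (0 : ℂ)))
            = ((0 : ℂ), (0 : ℂ)) := by
          show ((β 0 + c * 0 ^ q : ℂ), (0 : ℂ)) = _
          rw [hβ0, zero_pow hq0]
          norm_num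
        rw [h00]
        exact analyticAt_DD e (hg _ h0V)
      exact AnalyticAt.comp (f := fun p : ℂ × ℂ => ((β p.2 + p.1 * p.2 ^ q : ℂ), p.2))
        houter hinner
    have hcurve_an : AnalyticAt ℂ (fun p : ℂ × ℂ => ((p.1 : ℂ), ψu p.2)) (vt 0, 0) :=
      analyticAt_fst.prod (AnalyticAt.comp (f := fun p : ℂ × ℂ => p.2) hψuan analyticAt_snd)
    have hFcomp_an : AnalyticAt ℂ (fun p : ℂ × ℂ => G2 (p.1, ψu p.2)) (vt 0, 0) := by
      have hat : AnalyticAt ℂ G2 ((fun p : ℂ × ℂ => ((p.1 : ℂ), ψu p.2)) (vt 0, 0)) := by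
        show AnalyticAt ℂ G2 (vt 0, ψu 0)
        rw [hψu0]
        exact hG2an (vt 0)
      exact AnalyticAt.comp (f := fun p : ℂ × ℂ => ((p.1 : ℂ), ψu p.2)) hat hcurve_an
    refine enat_le_of fun M hM => ?_
    refine ord0_ge_iff.mpr fun k hk => ?_
    have hEq : (fun y => fderiv ℂ g (P y, ψu y) e) =ᶠ[𝓝 (0 : ℂ)]
        fun y => G2 (vt y, ψu y) := by
      filter_upwards [hptw] with y hy
      show fderiv ℂ g (P y, ψu y) e = fderiv ℂ g (β (ψu y) + vt y * ψu y ^ q, ψu y) e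
      rw [hy]
    rw [Filter.EventuallyEq.iteratedDeriv_eq k hEq]
    have hvan : ∀ᶠ v in 𝓝 (vt 0), ∀ j ≤ k,
        iteratedDeriv j (fun y => G2 (v, ψu y)) 0 = 0 := by
      refine Filter.Eventually.of_forall fun v j hj => ?_
      have hslice_an : AnalyticAt ℂ (fun y' => G2 (v, y')) 0 := by
        have hc : AnalyticAt ℂ (fun y' : ℂ => ((v : ℂ), y')) 0 :=
          analyticAt_const.prod analyticAt_id
        exact AnalyticAt.comp (f := fun y' : ℂ => ((v : ℂ), y')) (hG2an v) hc
      have hOrd : ord₀ (fun y => G2 (v, ψu y)) = ord₀ (fun y' => G2 (v, y')) :=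
        ord0_comp hslice_an hψuan hψu0 hψud
      have hΛv : (M : ℕ∞) ≤ ord₀ (fun y => G2 (v, ψu y)) := by
        rw [hOrd]
        exact le_trans hM (hve v)
      exact ord0_ge_iff.mp hΛv j (lt_of_le_of_lt hj hk)
    exact tail_claim k (fun p : ℂ × ℂ => G2 (p.1, ψu p.2)) vt (vt 0)
      hFcomp_an hvtan rfl hvan k le_rfl
  refine le_min (main (1, 0) fun v => ?_) (main (0, 1) fun v => ?_)
  · refine le_trans ?_ (min_le_left
      (ord₀ (fun y => fderiv ℂ g (β y + v * y ^ q, y) (1, 0)))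
      (ord₀ (fun y => fderiv ℂ g (β y + v * y ^ q, y) (0, 1))))
    rw [gradOrdPert]
    exact iInf_le _ v
  · refine le_trans ?_ (min_le_right
      (ord₀ (fun y => fderiv ℂ g (β y + v * y ^ q, y) (1, 0)))
      (ord₀ (fun y => fderiv ℂ g (β y + v * y ^ q, y) (0, 1))))
    rw [gradOrdPert]
    exact iInf_le _ v

/-! ### the one-sided comparison -/

lemma oneside
    (U V : Set (ℂ × ℂ)) (hUopen : IsOpen U) (hVopen : IsOpen V)
    (h0U : ((0 : ℂ), (0 : ℂ)) ∈ U) (h0V : ((0 : ℂ), (0 : ℂ)) ∈ V)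
    (φ φinv : ℂ × ℂ → ℂ × ℂ)
    (hφ : ∀ p ∈ U, AnalyticAt ℂ φ p) (hφinv : ∀ p ∈ V, AnalyticAt ℂ φinv p)
    (hφUV : Set.MapsTo φ U V)
    (hleft : ∀ p ∈ U, φinv (φ p) = p) (hright : ∀ p ∈ V, φ (φinv p) = p)
    (hφ0 : φ (0, 0) = (0, 0))
    (g : ℂ × ℂ → ℂ) (hg : ∀ p ∈ V, AnalyticAt ℂ g p)
    (f : ℂ × ℂ → ℂ) (heq : ∀ p ∈ U, f p = g (φ p))
    (α : ℂ → ℂ) (hα : AnalyticAt ℂ α 0) (hα0 : α 0 = 0)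
    (hψd : deriv (fun y => (φ (α y, y)).2) 0 ≠ 0)
    (ψi : ℂ → ℂ) (hψi : AnalyticAt ℂ ψi 0) (hψi0 : ψi 0 = 0)
    (hψil : ∀ᶠ y in 𝓝 (0 : ℂ), ψi ((φ (α y, y)).2) = y)
    (β : ℂ → ℂ) (hβdef : β =ᶠ[𝓝 (0 : ℂ)] fun w => (φ (α (ψi w), ψi w)).1) :
    (∀ q : ℕ, 1 ≤ q → gradOrdPert g β q ≤ gradOrdPert f α q)
    ∧ min (ord₀ (fun y => fderiv ℂ f (α y, y) (1, 0)))
          (ord₀ (fun y => fderiv ℂ f (α y, y) (0, 1)))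
        = min (ord₀ (fun w => fderiv ℂ g (β w, w) (1, 0)))
              (ord₀ (fun w => fderiv ℂ g (β w, w) (0, 1))) := by
  -- basic objects
  have hγ0an : AnalyticAt ℂ (fun y : ℂ => ((α y : ℂ), y)) 0 := hα.prod analyticAt_id
  have hγ00 : (fun y : ℂ => ((α y : ℂ), y)) 0 = ((0 : ℂ), (0 : ℂ)) := by
    show ((α 0 : ℂ), (0 : ℂ)) = _
    rw [hα0]
  have hβ0 : β 0 = 0 := by
    have h := hβdef.eq_of_nhds
    rw [h]
    show (φ (α (ψi 0), ψi 0)).1 = 0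
    rw [hψi0, hα0, hφ0]
  have hαψi : AnalyticAt ℂ (fun w => α (ψi w)) 0 := by
    have h : AnalyticAt ℂ α (ψi 0) := by rw [hψi0]; exact hα
    exact AnalyticAt.comp (f := ψi) h hψi
  have hβan : AnalyticAt ℂ β 0 := by
    have hcurve : AnalyticAt ℂ (fun w => ((α (ψi w) : ℂ), ψi w)) 0 := hαψi.prod hψi
    have hcurve0 : (fun w => ((α (ψi w) : ℂ), ψi w)) 0 = ((0 : ℂ), (0 : ℂ)) := by
      show ((α (ψi 0) : ℂ), ψi 0) = _
      rw [hψi0, hα0]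
    have h1 : AnalyticAt ℂ (fun p : ℂ × ℂ => (φ p).1) ((0 : ℂ), (0 : ℂ)) :=
      AnalyticAt.comp (f := φ) analyticAt_fst (hφ _ h0U)
    have hmid : AnalyticAt ℂ (fun w => (φ (α (ψi w), ψi w)).1) 0 :=
      analyticAt_comp_curve (F := fun p : ℂ × ℂ => (φ p).1) hcurve hcurve0 h1
    exact hmid.congr hβdef.symm
  -- the reparametrization ψg := (φ (α y, y)).2
  have hψgan : AnalyticAt ℂ (fun y => (φ (α y, y)).2) 0 := by
    have h1 : AnalyticAt ℂ (fun p : ℂ × ℂ => (φ p).2) ((0 : ℂ), (0 : ℂ)) :=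
      AnalyticAt.comp (f := φ) analyticAt_snd (hφ _ h0U)
    exact analyticAt_comp_curve (F := fun p : ℂ × ℂ => (φ p).2) hγ0an hγ00 h1
  have hψg0 : (φ (α (0 : ℂ), (0 : ℂ))).2 = 0 := by rw [hα0, hφ0]
  have hψgt : Filter.Tendsto (fun y => (φ (α y, y)).2) (𝓝 (0 : ℂ)) (𝓝 (0 : ℂ)) := by
    have h := hψgan.continuousAt
    rw [ContinuousAt] at h
    rwa [hψg0] at h
  -- key: the base arc transforms to the graph of β
  have hP0ev : ∀ᶠ y in 𝓝 (0 : ℂ), (φ (α y, y)).1 = β ((φ (α y, y)).2) := by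
    have hβc := hβdef.comp_tendsto hψgt
    filter_upwards [hβc, hψil] with y h1 h2
    simp only [Function.comp_apply] at h1
    rw [h1, h2]
  -- part 2 : equality of the base orders
  have hbase_fg : ∀ e : ℂ × ℂ, (fun y => fderiv ℂ f (α y, y) e) =ᶠ[𝓝 (0 : ℂ)]
      fun y => fderiv ℂ (fun p => g (φ p)) (α y, y) e := by
    intro e
    filter_upwards [eventually_mem_curve hγ0an hγ00 hUopen h0U] with y hy
    have hfg : f =ᶠ[𝓝 ((α y, y) : ℂ × ℂ)] fun p => g (φ p) := by
      filter_upwards [hUopen.eventually_mem hy] with p hp using heq p hp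
    rw [hfg.fderiv_eq]
  have hchain0 : min (ord₀ fun y => fderiv ℂ (fun p => g (φ p)) (α y, y) (1, 0))
        (ord₀ fun y => fderiv ℂ (fun p => g (φ p)) (α y, y) (0, 1))
      = min (ord₀ fun y => fderiv ℂ g (φ (α y, y)) (1, 0))
            (ord₀ fun y => fderiv ℂ g (φ (α y, y)) (0, 1)) :=
    chain_min U V hUopen hVopen φ φinv hφ hφinv hφUV hleft hright g hg
      (fun y : ℂ => ((α y : ℂ), y)) hγ0an hγ00 h0U
  have hb3 : ∀ e : ℂ × ℂ, ord₀ (fun y => fderiv ℂ g (φ (α y, y)) e)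
      = ord₀ (fun w => fderiv ℂ g (β w, w) e) := by
    intro e
    have hcompEq : (fun y => fderiv ℂ g (φ (α y, y)) e) =ᶠ[𝓝 (0 : ℂ)]
        fun y => fderiv ℂ g (β ((φ (α y, y)).2), (φ (α y, y)).2) e := by
      filter_upwards [hP0ev] with y hy
      rw [← hy]
    rw [ord0_congr hcompEq]
    have hslice : AnalyticAt ℂ (fun w => fderiv ℂ g (β w, w) e) 0 := by
      have hin : AnalyticAt ℂ (fun w : ℂ => ((β w : ℂ), w)) 0 := hβan.prod analyticAt_id
      have hin0 : (fun w : ℂ => ((β w : ℂ), w)) 0 = ((0 : ℂ), (0 : ℂ)) := by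
        show ((β 0 : ℂ), (0 : ℂ)) = _
        rw [hβ0]
      exact analyticAt_comp_curve hin hin0 (analyticAt_DD e (hg _ h0V))
    exact ord0_comp hslice hψgan hψg0 hψd
  have hbase : min (ord₀ (fun y => fderiv ℂ f (α y, y) (1, 0)))
        (ord₀ (fun y => fderiv ℂ f (α y, y) (0, 1)))
      = min (ord₀ (fun w => fderiv ℂ g (β w, w) (1, 0)))
            (ord₀ (fun w => fderiv ℂ g (β w, w) (0, 1))) := by
    rw [ord0_congr (hbase_fg (1, 0)), ord0_congr (hbase_fg (0, 1)), hchain0,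
      hb3 (1, 0), hb3 (0, 1)]
  refine ⟨?_, hbase⟩
  -- part 1 : the per-q inequality
  intro q hq
  have hq0 : q ≠ 0 := by omega
  have hγuan : ∀ u : ℂ, AnalyticAt ℂ (fun y : ℂ => ((α y + u * y ^ q : ℂ), y)) 0 :=
    fun u => (hα.add (analyticAt_const.mul (analyticAt_id.pow q))).prod analyticAt_id
  have hγu0 : ∀ u : ℂ, (fun y : ℂ => ((α y + u * y ^ q : ℂ), y)) 0 = ((0 : ℂ), (0 : ℂ)) := by
    intro u
    show ((α 0 + u * 0 ^ q : ℂ), (0 : ℂ)) = _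
    rw [hα0, zero_pow hq0, mul_zero, add_zero]
  have hfϝu : ∀ (u : ℂ) (e : ℂ × ℂ), (fun y => fderiv ℂ f (α y + u * y ^ q, y) e)
      =ᶠ[𝓝 (0 : ℂ)] fun y => fderiv ℂ (fun p => g (φ p)) (α y + u * y ^ q, y) e := by
    intro u e
    filter_upwards [eventually_mem_curve (hγuan u) (hγu0 u) hUopen h0U] with y hy
    have hfg : f =ᶠ[𝓝 ((α y + u * y ^ q, y) : ℂ × ℂ)] fun p => g (φ p) := by
      filter_upwards [hUopen.eventually_mem hy] with p hp using heq p hp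
    rw [hfg.fderiv_eq]
  have hRHS : gradOrdPert f α q = gradOrdPert (fun p => g (φ p)) α q := by
    rw [gradOrdPert, gradOrdPert]
    exact iInf_congr fun u => by
      rw [ord0_congr (hfϝu u (1, 0)), ord0_congr (hfϝu u (0, 1))]
  rw [hRHS]
  cases hΛ : gradOrdPert (fun p => g (φ p)) α q with
  | top => exact le_top
  | coe Nf =>
    rw [gradOrdPert] at hΛ
    obtain ⟨u₀, hu₀⟩ := exists_eq_of_iInf hΛ
    -- the second-coordinate family and its derivative coefficient
    have hθan : ∀ c : ℂ, AnalyticAt ℂ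
        (fun p : ℂ × ℂ => ((α p.2 + p.1 * p.2 ^ q : ℂ), p.2)) (c, 0) := by
      intro c
      have hα2 : AnalyticAt ℂ (fun p : ℂ × ℂ => α p.2) ((c : ℂ), (0 : ℂ)) :=
        AnalyticAt.comp (f := fun p : ℂ × ℂ => p.2) hα analyticAt_snd
      exact (hα2.add (analyticAt_fst.mul (analyticAt_snd.pow q))).prod analyticAt_snd
    have hθ0 : ∀ c : ℂ, (fun p : ℂ × ℂ => ((α p.2 + p.1 * p.2 ^ q : ℂ), p.2)) ((c : ℂ), (0 : ℂ))
        = ((0 : ℂ), (0 : ℂ)) := by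
      intro c
      show ((α 0 + c * 0 ^ q : ℂ), (0 : ℂ)) = _
      rw [hα0, zero_pow hq0, mul_zero, add_zero]
    have hΨan : ∀ c : ℂ, AnalyticAt ℂ
        (fun p : ℂ × ℂ => (φ (α p.2 + p.1 * p.2 ^ q, p.2)).2) (c, 0) := by
      intro c
      have hsndφ : AnalyticAt ℂ (fun r : ℂ × ℂ => (φ r).2)
          ((fun p : ℂ × ℂ => ((α p.2 + p.1 * p.2 ^ q : ℂ), p.2)) ((c : ℂ), (0 : ℂ))) := by
        rw [hθ0 c]
        exact AnalyticAt.comp (f := φ) analyticAt_snd (hφ _ h0U)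
      exact AnalyticAt.comp (f := fun p : ℂ × ℂ => ((α p.2 + p.1 * p.2 ^ q : ℂ), p.2))
        hsndφ (hθan c)
    have hc1an : ∀ c : ℂ, AnalyticAt ℂ
        (fun c' => iteratedDeriv 1
          (fun y => (φ (α y + c' * y ^ q, y)).2) 0) c :=
      fun c => analyticAt_coeff (hΨan c) 1
    have hc10 : iteratedDeriv 1 (fun y => (φ (α y + (0 : ℂ) * y ^ q, y)).2) 0 ≠ 0 := by
      have hfun : (fun y => (φ (α y + (0 : ℂ) * y ^ q, y)).2)
          = fun y => (φ (α y, y)).2 := by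
        funext y
        rw [zero_mul, add_zero]
      rw [hfun, iteratedDeriv_one]
      exact hψd
    -- the intrinsic gradient component family and the chosen component
    have hϝan : AnalyticAt ℂ (fun p => g (φ p)) ((0 : ℂ), (0 : ℂ)) := by
      have hgφ0 : AnalyticAt ℂ g (φ ((0 : ℂ), (0 : ℂ))) := by rw [hφ0]; exact hg _ h0V
      exact AnalyticAt.comp (f := φ) hgφ0 (hφ _ h0U)
    have hFan : ∀ (e : ℂ × ℂ) (c : ℂ), AnalyticAt ℂ
        (fun p : ℂ × ℂ => fderiv ℂ (fun p' => g (φ p'))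
          ((α p.2 + p.1 * p.2 ^ q : ℂ), p.2) e) (c, 0) := by
      intro e c
      have houter : AnalyticAt ℂ (DD e fun p' => g (φ p'))
          ((fun p : ℂ × ℂ => ((α p.2 + p.1 * p.2 ^ q : ℂ), p.2)) ((c : ℂ), (0 : ℂ))) := by
        rw [hθ0 c]
        exact analyticAt_DD e hϝan
      exact AnalyticAt.comp (f := fun p : ℂ × ℂ => ((α p.2 + p.1 * p.2 ^ q : ℂ), p.2))
        houter (hθan c)
    have hsel : ∃ T : ℂ × ℂ → ℂ, (∀ c : ℂ, AnalyticAt ℂ T (c, 0)) ∧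
        iteratedDeriv Nf (fun y => T (u₀, y)) 0 ≠ 0 ∧
        ∀ u : ℂ, min (ord₀ fun y => fderiv ℂ (fun p => g (φ p)) (α y + u * y ^ q, y) (1, 0))
            (ord₀ fun y => fderiv ℂ (fun p => g (φ p)) (α y + u * y ^ q, y) (0, 1))
          ≤ ord₀ (fun y => T (u, y)) := by
      rcases min_eq_iff.mp hu₀ with ⟨h, _⟩ | ⟨h, _⟩
      · exact ⟨fun p : ℂ × ℂ => fderiv ℂ (fun p' => g (φ p'))
            ((α p.2 + p.1 * p.2 ^ q : ℂ), p.2) (1, 0), hFan (1, 0),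
          (ord0_eq_coe.mp h).2, fun u => min_le_left _ _⟩
      · exact ⟨fun p : ℂ × ℂ => fderiv ℂ (fun p' => g (φ p'))
            ((α p.2 + p.1 * p.2 ^ q : ℂ), p.2) (0, 1), hFan (0, 1),
          (ord0_eq_coe.mp h).2, fun u => min_le_right _ _⟩
    obtain ⟨T, hTan, hTu₀, hTmin⟩ := hsel
    have hCan : ∀ c : ℂ, AnalyticAt ℂ
        (fun c' => iteratedDeriv Nf (fun y => T (c', y)) 0) c :=
      fun c => analyticAt_coeff (hTan c) Nf
    obtain ⟨u, hCu, hc1u⟩ := exists_common_ne hCan hc1an hTu₀ hc10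
    -- facts about the chosen u
    have hψuan : AnalyticAt ℂ (fun y => (φ (α y + u * y ^ q, y)).2) 0 := by
      have hsndφ : AnalyticAt ℂ (fun r : ℂ × ℂ => (φ r).2) ((0 : ℂ), (0 : ℂ)) :=
        AnalyticAt.comp (f := φ) analyticAt_snd (hφ _ h0U)
      exact analyticAt_comp_curve (F := fun r : ℂ × ℂ => (φ r).2) (hγuan u) (hγu0 u) hsndφ
    have hψu0 : (φ (α (0 : ℂ) + u * (0 : ℂ) ^ q, (0 : ℂ))).2 = 0 := by
      rw [hα0, zero_pow hq0, mul_zero, add_zero, hφ0]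
    have hψud : deriv (fun y => (φ (α y + u * y ^ q, y)).2) 0 ≠ 0 := by
      have h := hc1u
      rwa [iteratedDeriv_one] at h
    have hAan : ∀ u' : ℂ, AnalyticAt ℂ (fun y => (φ (α y + u' * y ^ q, y)).1) 0 := by
      intro u'
      have hfstφ : AnalyticAt ℂ (fun r : ℂ × ℂ => (φ r).1) ((0 : ℂ), (0 : ℂ)) :=
        AnalyticAt.comp (f := φ) analyticAt_fst (hφ _ h0U)
      exact analyticAt_comp_curve (F := fun r : ℂ × ℂ => (φ r).1) (hγuan u') (hγu0 u') hfstφ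
    have hBan : ∀ u' : ℂ, AnalyticAt ℂ
        (fun y => β ((φ (α y + u' * y ^ q, y)).2)) 0 := by
      intro u'
      have h1 : AnalyticAt ℂ (fun r : ℂ × ℂ => (φ r).2) ((0 : ℂ), (0 : ℂ)) :=
        AnalyticAt.comp (f := φ) analyticAt_snd (hφ _ h0U)
      have h2 : AnalyticAt ℂ β ((φ ((0 : ℂ), (0 : ℂ))).2) := by
        rw [hφ0]
        exact hβan
      have hW2 : AnalyticAt ℂ (fun r : ℂ × ℂ => β ((φ r).2)) ((0 : ℂ), (0 : ℂ)) :=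
        AnalyticAt.comp (f := fun r : ℂ × ℂ => (φ r).2) h2 h1
      exact analyticAt_comp_curve (F := fun r : ℂ × ℂ => β ((φ r).2)) (hγuan u') (hγu0 u') hW2
    -- vanishing of the discrepancy to order q
    have hδvan : ∀ k < q, iteratedDeriv k
        (fun y => (φ (α y + u * y ^ q, y)).1 - β ((φ (α y + u * y ^ q, y)).2)) 0 = 0 := by
      intro k hk
      have hW1 : AnalyticAt ℂ (fun p : ℂ × ℂ => (φ p).1) ((0 : ℂ), (0 : ℂ)) :=
        AnalyticAt.comp (f := φ) analyticAt_fst (hφ _ h0U)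
      have hW2 : AnalyticAt ℂ (fun p : ℂ × ℂ => β ((φ p).2)) ((0 : ℂ), (0 : ℂ)) := by
        have h1 : AnalyticAt ℂ (fun p : ℂ × ℂ => (φ p).2) ((0 : ℂ), (0 : ℂ)) :=
          AnalyticAt.comp (f := φ) analyticAt_snd (hφ _ h0U)
        have h2 : AnalyticAt ℂ β ((φ ((0 : ℂ), (0 : ℂ))).2) := by
          rw [hφ0]
          exact hβan
        exact AnalyticAt.comp (f := fun p : ℂ × ℂ => (φ p).2) h2 h1
      rw [iter_sub (hAan u) (hBan u)]
      have e1 : iteratedDeriv k (fun y => (φ (α y + u * y ^ q, y)).1) 0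
          = iteratedDeriv k (fun y => (φ (α y + (0 : ℂ) * y ^ q, y)).1) 0 :=
        diffq hW1 hα hα0 hq u hk
      have e2 : iteratedDeriv k (fun y => β ((φ (α y + u * y ^ q, y)).2)) 0
          = iteratedDeriv k (fun y => β ((φ (α y + (0 : ℂ) * y ^ q, y)).2)) 0 :=
        diffq hW2 hα hα0 hq u hk
      rw [e1, e2]
      have e3 : iteratedDeriv k (fun y => (φ (α y + (0 : ℂ) * y ^ q, y)).1) 0
            - iteratedDeriv k (fun y => β ((φ (α y + (0 : ℂ) * y ^ q, y)).2)) 0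
          = iteratedDeriv k (fun y => (φ (α y + (0 : ℂ) * y ^ q, y)).1
            - β ((φ (α y + (0 : ℂ) * y ^ q, y)).2)) 0 :=
        (iter_sub (hAan 0) (hBan 0) k).symm
      rw [e3]
      have e4 : (fun y => (φ (α y + (0 : ℂ) * y ^ q, y)).1
          - β ((φ (α y + (0 : ℂ) * y ^ q, y)).2)) =ᶠ[𝓝 (0 : ℂ)] fun _ => (0 : ℂ) := by
        filter_upwards [hP0ev] with y hy
        show (φ (α y + (0 : ℂ) * y ^ q, y)).1 - β ((φ (α y + (0 : ℂ) * y ^ q, y)).2) = 0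
        rw [show (α y + (0 : ℂ) * y ^ q : ℂ) = α y by ring]
        rw [hy, sub_self]
      rw [Filter.EventuallyEq.iteratedDeriv_eq k e4, iter_const_zero k]
    -- apply step2 and chain_min
    have hstep2 := step2 V hVopen h0V g hg β hβan hβ0 q hq
      (fun y => (φ (α y + u * y ^ q, y)).1)
      (fun y => (φ (α y + u * y ^ q, y)).2)
      (hAan u) hψuan hψu0 hψud hδvan
    have hchainu : min (ord₀ fun y => fderiv ℂ (fun p => g (φ p)) (α y + u * y ^ q, y) (1, 0))
          (ord₀ fun y => fderiv ℂ (fun p => g (φ p)) (α y + u * y ^ q, y) (0, 1))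
        = min (ord₀ fun y => fderiv ℂ g (φ (α y + u * y ^ q, y)) (1, 0))
              (ord₀ fun y => fderiv ℂ g (φ (α y + u * y ^ q, y)) (0, 1)) :=
      chain_min U V hUopen hVopen φ φinv hφ hφinv hφUV hleft hright g hg
        (fun y : ℂ => ((α y + u * y ^ q : ℂ), y)) (hγuan u) (hγu0 u) h0U
    have hminNf : min (ord₀ fun y => fderiv ℂ (fun p => g (φ p)) (α y + u * y ^ q, y) (1, 0))
          (ord₀ fun y => fderiv ℂ (fun p => g (φ p)) (α y + u * y ^ q, y) (0, 1))
        = (Nf : ℕ∞) := by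
      refine le_antisymm ?_ ?_
      · refine le_trans (hTmin u) ?_
        exact ord0_le_coe_of_ne hCu
      · calc (Nf : ℕ∞) = _ := hΛ.symm
          _ ≤ _ := iInf_le _ u
    calc gradOrdPert g β q
        ≤ min (ord₀ fun y => fderiv ℂ g (φ (α y + u * y ^ q, y)) (1, 0))
              (ord₀ fun y => fderiv ℂ g (φ (α y + u * y ^ q, y)) (0, 1)) := hstep2
      _ = (Nf : ℕ∞) := by rw [← hchainu]; exact hminNf

end GradDeg

open GradDeg Topology in
/-- With `φ = (φ₁,φ₂) : U → V` a biholomorphism fixing `0`, `g` analytic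
on `V`, `f := g ∘ φ`, `α` an arc analytic near `0` with `α(0)=0`, `ψ(y) := φ₂(α(y),y)` of
vanishing order exactly `1`, `β(w) := φ₁(α(ψ⁻¹(w)), ψ⁻¹(w))`, `L_f` (resp. `L_g`) the
gradient order of `f` along `α` (resp. of `g` along `β`), and `d_f(α)` (resp. `d_g(β)`)
the least `q ≥ 1` with `Λ_f(q) = L_f` (resp. `Λ_g(q) = L_g`), one has `d_f(α) = d_g(β)`:
the gradient degree of corresponding arcs is the same. -/
theorem gradient_degree_analytic_invariant
    (U V : Set (ℂ × ℂ)) (hUopen : IsOpen U) (hVopen : IsOpen V)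
    (h0U : ((0 : ℂ), (0 : ℂ)) ∈ U) (h0V : ((0 : ℂ), (0 : ℂ)) ∈ V)
    (φ φinv : ℂ × ℂ → ℂ × ℂ)
    (hφ : ∀ p ∈ U, AnalyticAt ℂ φ p) (hφinv : ∀ p ∈ V, AnalyticAt ℂ φinv p)
    (hφUV : Set.MapsTo φ U V) (hφinvVU : Set.MapsTo φinv V U)
    (hleft : ∀ p ∈ U, φinv (φ p) = p) (hright : ∀ p ∈ V, φ (φinv p) = p)
    (hφ0 : φ (0, 0) = (0, 0))
    (g : ℂ × ℂ → ℂ) (hg : ∀ p ∈ V, AnalyticAt ℂ g p)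
    (f : ℂ × ℂ → ℂ) (hf : f = g ∘ φ)
    (α : ℂ → ℂ) (hα : AnalyticAt ℂ α 0) (hα0 : α 0 = 0)
    (ψ : ℂ → ℂ) (hψ : ψ = fun y => (φ (α y, y)).2)
    (hψord : ord₀ ψ = 1)
    (ψinv : ℂ → ℂ) (hψinv : AnalyticAt ℂ ψinv 0) (hψinv0 : ψinv 0 = 0)
    (hψleft : ∀ᶠ y in nhds (0 : ℂ), ψinv (ψ y) = y)
    (hψright : ∀ᶠ w in nhds (0 : ℂ), ψ (ψinv w) = w)
    (β : ℂ → ℂ) (hβ : β = fun w => (φ (α (ψinv w), ψinv w)).1)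
    (hne : ¬ ((∀ᶠ y in nhds (0 : ℂ), fderiv ℂ f (α y, y) (1, 0) = 0) ∧
              (∀ᶠ y in nhds (0 : ℂ), fderiv ℂ f (α y, y) (0, 1) = 0)))
    (Lf Lg : ℕ)
    (hLf : min (ord₀ (fun y => fderiv ℂ f (α y, y) (1, 0)))
               (ord₀ (fun y => fderiv ℂ f (α y, y) (0, 1))) = (Lf : ℕ∞))
    (hLg : min (ord₀ (fun w => fderiv ℂ g (β w, w) (1, 0)))
               (ord₀ (fun w => fderiv ℂ g (β w, w) (0, 1))) = (Lg : ℕ∞))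
    (df dg : ℕ)
    (hdf : IsLeast {q : ℕ | 1 ≤ q ∧ gradOrdPert f α q = (Lf : ℕ∞)} df)
    (hdg : IsLeast {q : ℕ | 1 ≤ q ∧ gradOrdPert g β q = (Lg : ℕ∞)} dg) :
    df = dg := by
  clear hne
  -- order-one facts about ψ
  have hψord' : ord₀ ψ = ((1 : ℕ) : ℕ∞) := by exact_mod_cast hψord
  have hψ0 : ψ 0 = 0 := by
    have h := (ord0_eq_coe.mp hψord').1 0 (by omega)
    simpa using h
  have hψder : deriv ψ 0 ≠ 0 := by
    have h := (ord0_eq_coe.mp hψord').2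
    rwa [iteratedDeriv_one] at h
  have hψan : AnalyticAt ℂ ψ 0 := by
    rw [hψ]
    have hγ0an : AnalyticAt ℂ (fun y : ℂ => ((α y : ℂ), y)) 0 := hα.prod analyticAt_id
    have hγ00 : (fun y : ℂ => ((α y : ℂ), y)) 0 = ((0 : ℂ), (0 : ℂ)) := by
      show ((α 0 : ℂ), (0 : ℂ)) = _
      rw [hα0]
    have h1 : AnalyticAt ℂ (fun p : ℂ × ℂ => (φ p).2) ((0 : ℂ), (0 : ℂ)) :=
      AnalyticAt.comp (f := φ) analyticAt_snd (hφ _ h0U)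
    exact analyticAt_comp_curve (F := fun p : ℂ × ℂ => (φ p).2) hγ0an hγ00 h1
  -- forward application of `oneside`
  have heq_f : ∀ p ∈ U, f p = g (φ p) := fun p _ => by rw [hf]; rfl
  have hψd_f : deriv (fun y => (φ (α y, y)).2) 0 ≠ 0 := by
    rw [hψ] at hψder
    exact hψder
  have hψil_f : ∀ᶠ y in 𝓝 (0 : ℂ), ψinv ((φ (α y, y)).2) = y := by
    filter_upwards [hψleft] with y h
    rw [hψ] at h
    exact h
  have hβdef_f : β =ᶠ[𝓝 (0 : ℂ)] fun w => (φ (α (ψinv w), ψinv w)).1 := by rw [hβ]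
  have hfwd := oneside U V hUopen hVopen h0U h0V φ φinv hφ hφinv hφUV hleft hright hφ0
    g hg f heq_f α hα hα0 hψd_f ψinv hψinv hψinv0 hψil_f β hβdef_f
  -- data for the reverse application
  have hφinv0 : φinv (0, 0) = ((0 : ℂ), (0 : ℂ)) := by
    have h := hleft _ h0U
    rwa [hφ0] at h
  have hf_an : ∀ p ∈ U, AnalyticAt ℂ f p := by
    intro p hp
    rw [hf]
    exact AnalyticAt.comp (f := φ) (hg _ (hφUV hp)) (hφ _ hp)
  have hgf : ∀ p ∈ V, g p = f (φinv p) := by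
    intro p hp
    rw [hf]
    show g p = g (φ (φinv p))
    rw [hright _ hp]
  have hαψinv : AnalyticAt ℂ (fun w => α (ψinv w)) 0 := by
    have h : AnalyticAt ℂ α (ψinv 0) := by rw [hψinv0]; exact hα
    exact AnalyticAt.comp (f := ψinv) h hψinv
  have hcurve : AnalyticAt ℂ (fun w => ((α (ψinv w) : ℂ), ψinv w)) 0 := hαψinv.prod hψinv
  have hcurve0 : (fun w => ((α (ψinv w) : ℂ), ψinv w)) 0 = ((0 : ℂ), (0 : ℂ)) := by
    show ((α (ψinv 0) : ℂ), ψinv 0) = _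
    rw [hψinv0, hα0]
  have hβan : AnalyticAt ℂ β 0 := by
    rw [hβ]
    have h1 : AnalyticAt ℂ (fun p : ℂ × ℂ => (φ p).1) ((0 : ℂ), (0 : ℂ)) :=
      AnalyticAt.comp (f := φ) analyticAt_fst (hφ _ h0U)
    exact analyticAt_comp_curve (F := fun p : ℂ × ℂ => (φ p).1) hcurve hcurve0 h1
  have hβ0 : β 0 = 0 := by
    rw [hβ]
    show (φ (α (ψinv 0), ψinv 0)).1 = 0
    rw [hψinv0, hα0, hφ0]
  have hcurveU : ∀ᶠ w in 𝓝 (0 : ℂ), ((α (ψinv w) : ℂ), ψinv w) ∈ U :=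
    eventually_mem_curve hcurve hcurve0 hUopen h0U
  have hpair : ∀ᶠ w in 𝓝 (0 : ℂ), ((β w : ℂ), w) = φ (α (ψinv w), ψinv w) := by
    filter_upwards [hψright] with w h2
    have h1 : β w = (φ (α (ψinv w), ψinv w)).1 := congrFun hβ w
    have h3 := congrFun hψ (ψinv w)
    rw [Prod.ext_iff]
    refine ⟨h1, ?_⟩
    show w = (φ (α (ψinv w), ψinv w)).2
    conv_lhs => rw [← h2]
    exact h3
  have hKI : ∀ᶠ w in 𝓝 (0 : ℂ), φinv (β w, w) = ((α (ψinv w) : ℂ), ψinv w) := by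
    filter_upwards [hpair, hcurveU] with w h1 h2
    rw [show ((β w : ℂ), w) = φ (α (ψinv w), ψinv w) from h1, hleft _ h2]
  have hψinv_der : deriv ψinv 0 ≠ 0 := by
    have hdiffψ : DifferentiableAt ℂ ψ 0 := hψan.differentiableAt
    have hdiffψi : DifferentiableAt ℂ ψinv (ψ 0) := by
      rw [hψ0]
      exact hψinv.differentiableAt
    have hchain : deriv (ψinv ∘ ψ) 0 = deriv ψinv (ψ 0) * deriv ψ 0 :=
      deriv_comp 0 hdiffψi hdiffψ
    have hid : deriv (ψinv ∘ ψ) 0 = 1 := by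
      have hcongr : (ψinv ∘ ψ) =ᶠ[𝓝 (0 : ℂ)] id := hψleft
      rw [hcongr.deriv_eq, deriv_id]
    rw [hid, hψ0] at hchain
    exact left_ne_zero_of_mul_eq_one hchain.symm
  have hψd_rev : deriv (fun w => (φinv (β w, w)).2) 0 ≠ 0 := by
    have hEq : (fun w => (φinv (β w, w)).2) =ᶠ[𝓝 (0 : ℂ)] ψinv := by
      filter_upwards [hKI] with w h
      rw [h]
    rw [hEq.deriv_eq]
    exact hψinv_der
  have hψil_rev : ∀ᶠ w in 𝓝 (0 : ℂ), ψ ((φinv (β w, w)).2) = w := by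
    filter_upwards [hKI, hψright] with w h1 h2
    rw [h1]
    exact h2
  have hβdef_rev : α =ᶠ[𝓝 (0 : ℂ)] fun y => (φinv (β (ψ y), ψ y)).1 := by
    have hγ0an : AnalyticAt ℂ (fun y : ℂ => ((α y : ℂ), y)) 0 := hα.prod analyticAt_id
    have hγ00 : (fun y : ℂ => ((α y : ℂ), y)) 0 = ((0 : ℂ), (0 : ℂ)) := by
      show ((α 0 : ℂ), (0 : ℂ)) = _
      rw [hα0]
    filter_upwards [hψleft, eventually_mem_curve hγ0an hγ00 hUopen h0U] with y h1 h2
    have hb : β (ψ y) = (φ (α y, y)).1 := by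
      rw [congrFun hβ (ψ y), h1]
    have hpair2 : ((β (ψ y) : ℂ), ψ y) = φ (α y, y) := by
      rw [hb, congrFun hψ y]
    show α y = (φinv (β (ψ y), ψ y)).1
    rw [hpair2, hleft _ h2]
  have hrev := oneside V U hVopen hUopen h0V h0U φinv φ hφinv hφ hφinvVU hright hleft
    hφinv0 f hf_an g hgf β hβan hβ0 hψd_rev ψ hψan hψ0 hψil_rev α hβdef_rev
  -- conclude
  have hLfg : Lf = Lg := by
    have h := hfwd.2
    rw [hLf, hLg] at h
    exact_mod_cast h
  have hsets : {q : ℕ | 1 ≤ q ∧ gradOrdPert f α q = (Lf : ℕ∞)}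
      = {q : ℕ | 1 ≤ q ∧ gradOrdPert g β q = (Lg : ℕ∞)} := by
    ext q
    simp only [Set.mem_setOf_eq]
    constructor
    · rintro ⟨hq1, hq2⟩
      exact ⟨hq1, by rw [← le_antisymm (hrev.1 q hq1) (hfwd.1 q hq1), hq2, hLfg]⟩
    · rintro ⟨hq1, hq2⟩
      exact ⟨hq1, by rw [le_antisymm (hrev.1 q hq1) (hfwd.1 q hq1), hq2, hLfg]⟩
  rw [hsets] at hdf
  exact hdf.unique hdg
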